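/- Let M ⊆ ℝ be a complete subset and N a complete metric space. Every curve-flat base-point-preserving Lipschitz map f : M → N factors through a complete purely 1-unrectifiable metric space: there exist a complete purely 1-unrectifiable metric space Q and Lipschitz maps g : M → Q, h : Q → N with f = h ∘ g. -/

import Mathlib

open Filter Set Topology

/-- The 1-dimensional Hausdorff measure on a metric space (with the Borel σ-algebra). -/
noncomputable def H1 (P : Type*) [MetricSpace P] : @MeasureTheory.Measure P (borel P) :=
  @MeasureTheory.Measure.hausdorffMeasure P _ (borel P) (@BorelSpace.mk P _ (borel P) rfl) 1

/-- A map `f : M → N` is curve-flat. -/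
def CurveFlat {M N : Type*} [MetricSpace M] [MetricSpace N] (f : M → N) : Prop :=
  ∀ (K : Set ℝ), IsCompact K → ∀ (γ : ℝ → M) (C : NNReal), LipschitzOnWith C γ K →
    ∀ᵐ x ∂(MeasureTheory.volume.restrict K),
      Tendsto (fun y => dist (f (γ x)) (f (γ y)) / |x - y|) (nhdsWithin x (K \ {x})) (nhds 0)

/-- A metric space is purely 1-unrectifiable. -/
def PurelyOneUnrectifiable (P : Type*) [MetricSpace P] : Prop :=
  ∀ (A : Set ℝ) (γ : ℝ → P) (C : NNReal), LipschitzOnWith C γ A → H1 P (γ '' A) = 0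

/-- A factorization of `f : M → N` through a complete purely 1-unrectifiable
metric space. -/
structure P1UFactorization {M N : Type} [MetricSpace M] [MetricSpace N] (f : M → N) :
    Type 1 where
  Q : Type
  [iQ : MetricSpace Q]
  complete : CompleteSpace Q
  p1u : PurelyOneUnrectifiable Q
  g : M → Q
  h : Q → N
  Lg : NNReal
  Lh : NNReal
  lipg : LipschitzWith Lg g
  liph : LipschitzWith Lh h
  fact : f = h ∘ g

open MeasureTheory Metric UniformSpace
open scoped ENNReal NNReal


section Osc
variable {N : Type} [MetricSpace N] {M : Set ℝ} (f : M → N)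

/-- set of oscillation values of `f` between `x` and `y`. -/
def oscSet (x y : M) : Set ℝ :=
  {d | ∃ a b : M, (a : ℝ) ∈ uIcc (x : ℝ) (y : ℝ) ∧ (b : ℝ) ∈ uIcc (x : ℝ) (y : ℝ) ∧
    d = dist (f a) (f b)}

noncomputable def oscDist (x y : M) : ℝ := sSup (oscSet f x y)

lemma zero_mem_oscSet (x y : M) : (0 : ℝ) ∈ oscSet f x y :=
  ⟨x, x, left_mem_uIcc, left_mem_uIcc, (dist_self _).symm⟩

lemma oscSet_nonempty (x y : M) : (oscSet f x y).Nonempty := ⟨0, zero_mem_oscSet f x y⟩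

variable {Lf : NNReal} (hf : LipschitzWith Lf f)
include hf

lemma le_of_mem_oscSet {x y : M} {d : ℝ} (hd : d ∈ oscSet f x y) :
    d ≤ Lf * dist (x : ℝ) (y : ℝ) := by
  obtain ⟨a, b, ha, hb, rfl⟩ := hd
  calc dist (f a) (f b) ≤ Lf * dist a b := hf.dist_le_mul a b
    _ ≤ Lf * dist (x : ℝ) (y : ℝ) := by
        apply mul_le_mul_of_nonneg_left _ Lf.coe_nonneg
        rw [Subtype.dist_eq, Real.dist_eq, Real.dist_eq, abs_sub_comm (x:ℝ)]
        exact abs_sub_le_of_uIcc_subset_uIcc (uIcc_subset_uIcc hb ha)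

lemma bddAbove_oscSet (x y : M) : BddAbove (oscSet f x y) :=
  ⟨Lf * dist (x : ℝ) (y : ℝ), fun _ hd => le_of_mem_oscSet f hf hd⟩

lemma oscDist_le (x y : M) : oscDist f x y ≤ Lf * dist (x : ℝ) (y : ℝ) :=
  csSup_le (oscSet_nonempty f x y) fun _ hd => le_of_mem_oscSet f hf hd

lemma le_oscDist {x y : M} {d : ℝ} (hd : d ∈ oscSet f x y) : d ≤ oscDist f x y :=
  le_csSup (bddAbove_oscSet f hf x y) hd

lemma dist_le_oscDist (x y : M) : dist (f x) (f y) ≤ oscDist f x y :=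
  le_oscDist f hf ⟨x, y, left_mem_uIcc, right_mem_uIcc, rfl⟩

lemma oscDist_nonneg (x y : M) : 0 ≤ oscDist f x y :=
  le_oscDist f hf (zero_mem_oscSet f x y)

lemma oscDist_self (x : M) : oscDist f x x = 0 := by
  refine le_antisymm (csSup_le (oscSet_nonempty f x x) ?_) (oscDist_nonneg f hf x x)
  rintro d ⟨a, b, ha, hb, rfl⟩
  rw [uIcc_self, mem_singleton_iff] at ha hb
  have ha' : a = x := Subtype.ext ha
  have hb' : b = x := Subtype.ext hb
  simp [ha', hb']

omit hf in
lemma oscDist_comm (x y : M) : oscDist f x y = oscDist f y x := by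
  unfold oscDist oscSet
  rw [uIcc_comm]

lemma oscDist_mono {x y x' y' : M}
    (h : uIcc (x' : ℝ) (y' : ℝ) ⊆ uIcc (x : ℝ) (y : ℝ)) :
    oscDist f x' y' ≤ oscDist f x y := by
  apply csSup_le_csSup (bddAbove_oscSet f hf x y) (oscSet_nonempty f x' y')
  rintro d ⟨a, b, ha, hb, rfl⟩
  exact ⟨a, b, h ha, h hb, rfl⟩

lemma oscDist_triangle (x y z : M) :
    oscDist f x z ≤ oscDist f x y + oscDist f y z := by
  refine csSup_le (oscSet_nonempty f x z) ?_
  rintro d ⟨a, b, ha, hb, rfl⟩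
  have hsub : uIcc (x : ℝ) (z : ℝ) ⊆ uIcc (x : ℝ) (y : ℝ) ∪ uIcc (y : ℝ) (z : ℝ) :=
    uIcc_subset_uIcc_union_uIcc
  have key : ∀ c : M, (c : ℝ) ∈ uIcc (x : ℝ) (y : ℝ) ∪ uIcc (y : ℝ) (z : ℝ) →
      dist (f c) (f y) ≤ oscDist f x y + oscDist f y z := by
    intro c hc
    rcases hc with hc | hc
    · refine le_trans (le_oscDist f hf ⟨c, y, hc, right_mem_uIcc, rfl⟩) ?_
      exact le_add_of_nonneg_right (oscDist_nonneg f hf y z)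
    · refine le_trans (le_oscDist f hf ⟨c, y, hc, left_mem_uIcc, rfl⟩) ?_
      exact le_add_of_nonneg_left (oscDist_nonneg f hf x y)
  rcases hsub ha with ha' | ha' <;> rcases hsub hb with hb' | hb'
  · refine le_trans (le_oscDist f hf ⟨a, b, ha', hb', rfl⟩) ?_
    exact le_add_of_nonneg_right (oscDist_nonneg f hf y z)
  · calc dist (f a) (f b) ≤ dist (f a) (f y) + dist (f y) (f b) := dist_triangle _ _ _
      _ ≤ oscDist f x y + oscDist f y z := by
          refine add_le_add (le_oscDist f hf ⟨a, y, ha', right_mem_uIcc, rfl⟩)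
            (le_oscDist f hf ⟨y, b, left_mem_uIcc, hb', rfl⟩)
  · calc dist (f a) (f b) ≤ dist (f a) (f y) + dist (f y) (f b) := dist_triangle _ _ _
      _ ≤ oscDist f y z + oscDist f x y :=
          add_le_add (le_oscDist f hf ⟨a, y, ha', left_mem_uIcc, rfl⟩)
            (le_oscDist f hf ⟨y, b, right_mem_uIcc, hb', rfl⟩)
      _ = oscDist f x y + oscDist f y z := add_comm _ _
  · refine le_trans (le_oscDist f hf ⟨a, b, ha', hb', rfl⟩) ?_
    exact le_add_of_nonneg_left (oscDist_nonneg f hf x y)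

end Osc

lemma hausdorff_image_null {X : Type*} [MetricSpace X] [MeasurableSpace X] [BorelSpace X]
    {B : Set ℝ} (hB : MeasurableSet B) (hBvol : volume B ≠ ⊤)
    (q : ℝ → X) (L : NNReal) (hq : LipschitzOnWith L q B)
    (hflat : ∀ᵐ x ∂(volume.restrict B), ∀ ε : ℝ, 0 < ε → ∃ δ : ℝ, 0 < δ ∧
      ∀ r : ℝ, 0 < r → r ≤ δ → ∀ y ∈ B ∩ closedBall x r, ∀ z ∈ B ∩ closedBall x r,
        dist (q y) (q z) ≤ ε * r) :
    μH[1] (q '' B) = 0 := by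
  classical
  set P : ℝ → Prop := fun x => ∀ ε : ℝ, 0 < ε → ∃ δ : ℝ, 0 < δ ∧
      ∀ r : ℝ, 0 < r → r ≤ δ → ∀ y ∈ B ∩ closedBall x r, ∀ z ∈ B ∩ closedBall x r,
        dist (q y) (q z) ≤ ε * r with hPdef
  set s : Set ℝ := B ∩ {x | P x} with hs
  set Z : Set ℝ := B ∩ {x | ¬ P x} with hZ
  -- the exceptional set is Lebesgue-null
  have hZnull : volume Z = 0 := by
    have h1 : (volume.restrict B) {x | ¬ P x} = 0 := hflat
    rw [Measure.restrict_apply' hB] at h1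
    simpa [hZ, inter_comm] using h1
  -- its image is Hausdorff-null, since `q` is Lipschitz on `B`
  have hZim : μH[1] (q '' Z) = 0 := by
    refine le_antisymm ?_ zero_le
    have hlip : LipschitzOnWith L q Z := hq.mono inter_subset_left
    have h2 := hlip.hausdorffMeasure_image_le (zero_le_one (α := ℝ))
    have h3 : μH[1] Z = 0 := by
      rw [hausdorffMeasure_real]; exact hZnull
    rw [h3, mul_zero] at h2
    exact h2
  -- the image of the good set is Hausdorff-null
  have hsim : μH[1] (q '' s) = 0 := by
    have bound : ∀ ε : ℝ, 0 < ε →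
        μH[1] (q '' s) ≤ ENNReal.ofReal ε * (volume B + 1) := by
      intro ε hε
      -- admissible radii at scale `1/(m+1)`
      set F : ℕ → ℝ → Set ℝ := fun m x => {rr | 0 < rr ∧ rr ≤ 1/(m+1) ∧
        ∀ y ∈ B ∩ closedBall x rr, ∀ z ∈ B ∩ closedBall x rr,
          dist (q y) (q z) ≤ ε * rr} with hF
      have hFadm : ∀ m : ℕ, ∀ x ∈ s, ∀ δ > 0, (F m x ∩ Ioo 0 δ).Nonempty := by
        intro m x hx δ hδ
        obtain ⟨δ₁, hδ₁pos, hδ₁⟩ := hx.2 ε hε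
        have hm : (0:ℝ) < 1/(m+1) := by positivity
        refine ⟨min δ₁ (min (1/(m+1)) (δ/2)), ⟨?_, ?_, ?_⟩, ?_, ?_⟩
        · positivity
        · exact le_trans (min_le_right _ _) (min_le_left _ _)
        · exact hδ₁ _ (by positivity) (min_le_left _ _)
        · positivity
        · calc min δ₁ (min (1/(m+1)) (δ/2)) ≤ δ/2 :=
              le_trans (min_le_right _ _) (min_le_right _ _)
            _ < δ := by linarith
      have hcov : ∀ m : ℕ, ∃ (T : Set ℝ) (rad : ℝ → ℝ), T.Countable ∧ T ⊆ s ∧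
          (∀ x ∈ T, rad x ∈ F m x) ∧ (s ⊆ ⋃ x ∈ T, closedBall x (rad x)) ∧
          (∑' x : T, volume (closedBall (x : ℝ) (rad x))) ≤ volume s + 1 := by
        intro m
        obtain ⟨T, rad, hTc, hTs, hTrad, hTcov, hTsum⟩ :=
          Besicovitch.exists_closedBall_covering_tsum_measure_le volume one_ne_zero
            (F m) s (hFadm m)
        exact ⟨T, rad, hTc, hTs, hTrad, hTcov, hTsum⟩
      choose T rad hTc hTs hTrad hTcov hTsum using hcov
      haveI : ∀ m : ℕ, Countable (T m) := fun m => (hTc m).to_subtype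
      set t : ∀ m : ℕ, (T m) → Set X :=
        fun m p => q '' (B ∩ closedBall (p : ℝ) (rad m (p : ℝ))) with ht
      have hdiam : ∀ m (i : T m),
          EMetric.diam (t m i) ≤ ENNReal.ofReal (ε * rad m (i : ℝ)) := by
        intro m i
        apply EMetric.diam_le
        rintro u ⟨y, hy, rfl⟩ v ⟨z, hz, rfl⟩
        rw [edist_dist]
        exact ENNReal.ofReal_le_ofReal
          ((hTrad m _ i.2).2.2 y hy z hz)
      have hrad_le : ∀ m (i : T m), rad m (i : ℝ) ≤ 1/(m+1) :=
        fun m i => (hTrad m _ i.2).2.1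
      have hrad_pos : ∀ m (i : T m), 0 ≤ rad m (i : ℝ) :=
        fun m i => (hTrad m _ i.2).1.le
      have key := Measure.hausdorffMeasure_le_liminf_tsum (X := X) (l := atTop) 1 (q '' s)
        (fun m : ℕ => ENNReal.ofReal (ε * (1/(m+1)))) ?_ t ?_ ?_
      · refine key.trans ?_
        have hterm : ∀ m : ℕ, (∑' i : T m, EMetric.diam (t m i) ^ (1:ℝ))
            ≤ ENNReal.ofReal ε * (volume B + 1) := by
          intro m
          have h1 : ∀ i : T m, EMetric.diam (t m i) ^ (1:ℝ)
              ≤ ENNReal.ofReal (ε/2) * volume (closedBall (i : ℝ) (rad m (i : ℝ))) := by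
            intro i
            rw [ENNReal.rpow_one, Real.volume_closedBall, ← ENNReal.ofReal_mul (by linarith)]
            refine (hdiam m i).trans (ENNReal.ofReal_le_ofReal ?_)
            rw [← mul_assoc]
            gcongr
            · exact hrad_pos m i
            · linarith
          calc (∑' i : T m, EMetric.diam (t m i) ^ (1:ℝ))
              ≤ ∑' i : T m, ENNReal.ofReal (ε/2) *
                  volume (closedBall (i : ℝ) (rad m (i : ℝ))) := ENNReal.tsum_le_tsum h1
            _ = ENNReal.ofReal (ε/2) *
                  ∑' i : T m, volume (closedBall (i : ℝ) (rad m (i : ℝ))) :=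
                ENNReal.tsum_mul_left
            _ ≤ ENNReal.ofReal (ε/2) * (volume s + 1) := by
                exact mul_le_mul_right (hTsum m) _
            _ ≤ ENNReal.ofReal ε * (volume B + 1) := by
                have h1 : volume s ≤ volume B := by
                  rw [hs]; exact measure_mono inter_subset_left
                exact mul_le_mul' (ENNReal.ofReal_le_ofReal (by linarith))
                  (add_le_add_left h1 1)
        exact Filter.liminf_le_of_frequently_le' (Frequently.of_forall hterm)
      · -- radii tend to 0
        rw [show (0:ℝ≥0∞) = ENNReal.ofReal (ε * 0) by simp]
        apply ENNReal.tendsto_ofReal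
        exact (tendsto_one_div_add_atTop_nhds_zero_nat).const_mul ε
      · -- diameters small
        refine Eventually.of_forall (fun m i => ?_)
        refine (hdiam m i).trans (ENNReal.ofReal_le_ofReal ?_)
        gcongr
        exact hrad_le m i
      · -- covering
        refine Eventually.of_forall (fun m => ?_)
        rintro u ⟨x, hx, rfl⟩
        have := hTcov m hx
        simp only [mem_iUnion] at this
        obtain ⟨p, hp, hxp⟩ := this
        exact mem_iUnion.2 ⟨⟨p, hp⟩, ⟨x, ⟨hx.1, hxp⟩, rfl⟩⟩
    -- conclude
    refine le_antisymm ?_ zero_le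
    have hC : volume B + 1 ≠ ⊤ := by
      simp [ENNReal.add_ne_top, hBvol]
    have htend : Tendsto (fun k : ℕ => ENNReal.ofReal (1/(k+1)) * (volume B + 1))
        atTop (𝓝 0) := by
      rw [show (0:ℝ≥0∞) = 0 * (volume B + 1) by simp]
      apply ENNReal.Tendsto.mul_const _ (Or.inr hC)
      rw [show (0:ℝ≥0∞) = ENNReal.ofReal 0 by simp]
      exact ENNReal.tendsto_ofReal tendsto_one_div_add_atTop_nhds_zero_nat
    refine ge_of_tendsto' htend (fun k => bound (1/(k+1)) (by positivity))
  -- combine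
  refine le_antisymm ?_ zero_le
  have hsub : q '' B ⊆ q '' s ∪ q '' Z := by
    rw [← image_union]
    apply image_mono
    intro x hx
    by_cases hPx : P x
    · exact Or.inl ⟨hx, hPx⟩
    · exact Or.inr ⟨hx, hPx⟩
  calc μH[1] (q '' B) ≤ μH[1] (q '' s ∪ q '' Z) := measure_mono hsub
    _ ≤ μH[1] (q '' s) + μH[1] (q '' Z) := measure_union_le _ _
    _ = 0 := by rw [hsim, hZim, add_zero]

/-- The set of limits in the completion of sequences along which `φ` tends to `+∞`. -/
def endSet {X : Type} [PseudoMetricSpace X] (φ : X → ℝ) : Set (Completion X) :=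
  {q | ∃ u : ℕ → X, Tendsto (fun k => φ (u k)) atTop atTop ∧
    Tendsto (fun k => ((u k : Completion X))) atTop (𝓝 q)}

lemma endSet_subsingleton {X : Type} [PseudoMetricSpace X] (φ : X → ℝ)
    (hmono : ∀ x y z : X, φ x ≤ φ y → φ y ≤ φ z → dist x y ≤ dist x z) :
    (endSet φ).Subsingleton := by
  rintro q ⟨u, huφ, huq⟩ q' ⟨u', hu'φ, hu'q⟩
  have key : ∀ ε : ℝ, 0 < ε → dist q q' ≤ 3 * ε := by
    intro ε hε
    have hc : CauchySeq (fun k => ((u k : Completion X))) := huq.cauchySeq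
    rw [Metric.cauchySeq_iff] at hc
    obtain ⟨K, hK⟩ := hc ε hε
    obtain ⟨K₁, hK₁⟩ := Metric.tendsto_atTop.mp huq ε hε
    set k := max K K₁ with hk
    -- choose j with `φ (u' j) ≥ φ (u k)` and `dist (u' j) q' < ε`
    obtain ⟨K₂, hK₂⟩ := Metric.tendsto_atTop.mp hu'q ε hε
    obtain ⟨K₃, hK₃⟩ := eventually_atTop.mp (tendsto_atTop.mp hu'φ (φ (u k)))
    set j := max K₂ K₃ with hj
    -- choose m ≥ K with φ (u m) ≥ φ (u' j)
    obtain ⟨K₄, hK₄⟩ := eventually_atTop.mp (tendsto_atTop.mp huφ (φ (u' j)))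
    set m := max K K₄ with hm
    have h2 : dist ((u k : Completion X)) ((u' j : Completion X)) < ε := by
      have hd : dist (u k) (u' j) ≤ dist (u k) (u m) :=
        hmono _ _ _ (hK₃ j (le_max_right _ _)) (hK₄ m (le_max_right _ _))
      have : dist ((u k : Completion X)) ((u m : Completion X)) < ε :=
        hK k (le_max_left _ _) m (le_max_left _ _)
      rw [Completion.dist_eq] at this ⊢
      exact lt_of_le_of_lt hd this
    calc dist q q' ≤ dist q ((u k : Completion X)) +
          dist ((u k : Completion X)) ((u' j : Completion X)) +
          dist ((u' j : Completion X)) q' := dist_triangle4 _ _ _ _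
      _ ≤ ε + ε + ε := by
          refine add_le_add (add_le_add ?_ h2.le) ?_
          · rw [dist_comm]; exact (hK₁ k (le_max_right _ _)).le
          · exact (hK₂ j (le_max_left _ _)).le
      _ = 3 * ε := by ring
  have h0 : dist q q' ≤ 0 := by
    refine le_of_forall_pos_le_add (fun ε hε => ?_)
    calc dist q q' ≤ 3 * (ε/3) := key _ (by linarith)
      _ = 0 + ε := by ring
  exact eq_of_dist_eq_zero (le_antisymm h0 dist_nonneg)

lemma completion_univ_null {X : Type} [PseudoMetricSpace X]
    [MeasurableSpace (Completion X)] [BorelSpace (Completion X)]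
    (φ : X → ℝ)
    (hcpt : ∀ n : ℕ, ∀ u : ℕ → X, (∀ k, |φ (u k)| ≤ n) →
      ∃ (x : X) (ψ : ℕ → ℕ), StrictMono ψ ∧
        Tendsto (fun k => dist (u (ψ k)) x) atTop (𝓝 0))
    (hmono : ∀ x y z : X, φ x ≤ φ y → φ y ≤ φ z → dist x y ≤ dist x z)
    (hmono2 : ∀ x y z : X, φ x ≤ φ y → φ y ≤ φ z → dist y z ≤ dist x z)
    (hnull : ∀ n : ℕ, μH[1] (((↑) : X → Completion X) '' {x | |φ x| ≤ (n : ℝ)}) = 0) :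
    μH[1] (univ : Set (Completion X)) = 0 := by
  classical
  haveI : NullSingletonClass (μH[1] : Measure (Completion X)) := Measure.noAtoms_hausdorff (Completion X) one_pos
  have hsing : ∀ S : Set (Completion X), S.Subsingleton → μH[1] S = 0 := by
    intro S hS
    rcases hS.eq_empty_or_singleton with rfl | ⟨x, rfl⟩
    · simp
    · exact measure_singleton x
  have hcover : (univ : Set (Completion X)) ⊆
      (⋃ n : ℕ, ((↑) : X → Completion X) '' {x | |φ x| ≤ (n : ℝ)}) ∪
        (endSet φ ∪ endSet (fun x => -φ x)) := by
    intro qq _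
    have hd : qq ∈ closure (range ((↑) : X → Completion X)) :=
      Completion.denseRange_coe qq
    obtain ⟨v, hv_mem, hv_lim⟩ := mem_closure_iff_seq_limit.mp hd
    choose u hu using hv_mem
    by_cases hcase : ∃ n : ℕ, ∃ᶠ k in atTop, |φ (u k)| ≤ n
    · obtain ⟨n, hn⟩ := hcase
      obtain ⟨ψ₀, hψ₀mono, hψ₀⟩ := Filter.extraction_of_frequently_atTop hn
      obtain ⟨x, ψ, hψmono, hψ⟩ := hcpt n (u ∘ ψ₀) hψ₀
      have hlim1 : Tendsto (fun k => ((u (ψ₀ (ψ k)) : Completion X))) atTop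
          (𝓝 (x : Completion X)) := by
        apply tendsto_iff_dist_tendsto_zero.mpr
        simpa [Completion.dist_eq] using hψ
      have hlim2 : Tendsto (fun k => ((u (ψ₀ (ψ k)) : Completion X))) atTop (𝓝 qq) := by
        have h3 : Tendsto (fun k => v (ψ₀ (ψ k))) atTop (𝓝 qq) :=
          hv_lim.comp ((hψ₀mono.comp hψmono).tendsto_atTop)
        simpa [hu] using h3
      have hqx : qq = (x : Completion X) := tendsto_nhds_unique hlim2 hlim1
      left
      exact mem_iUnion.2 ⟨Nat.ceil |φ x|, ⟨x, by simpa using Nat.le_ceil |φ x|, hqx.symm⟩⟩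
    · push_neg at hcase
      have habs : Tendsto (fun k => |φ (u k)|) atTop atTop := by
        refine tendsto_atTop.2 (fun b => ?_)
        obtain ⟨n, hn⟩ := exists_nat_ge b
        have hcn : ∀ᶠ k in atTop, ¬(|φ (u k)| ≤ (n : ℝ)) :=
          (hcase n).mono fun k hk => not_le.mpr hk
        filter_upwards [hcn] with k hk
        push_neg at hk
        linarith
      have hsign : (∃ᶠ k in atTop, 0 ≤ φ (u k)) ∨ (∃ᶠ k in atTop, φ (u k) < 0) := by
        by_contra hcon
        push_neg at hcon
        obtain ⟨h1, h2⟩ := hcon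
        have h3 := (h1.and h2).exists
        obtain ⟨k, hk1, hk2⟩ := h3
        linarith
      rcases hsign with hsign | hsign
      · obtain ⟨ψ, hψmono, hψ⟩ := Filter.extraction_of_frequently_atTop hsign
        right; left
        refine ⟨u ∘ ψ, ?_, ?_⟩
        · have h1 : Tendsto (fun k => |φ (u (ψ k))|) atTop atTop :=
            habs.comp hψmono.tendsto_atTop
          exact h1.congr (fun k => abs_of_nonneg (hψ k))
        · have h3 : Tendsto (fun k => v (ψ k)) atTop (𝓝 qq) :=
            hv_lim.comp hψmono.tendsto_atTop
          simpa [hu] using h3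
      · obtain ⟨ψ, hψmono, hψ⟩ := Filter.extraction_of_frequently_atTop hsign
        right; right
        refine ⟨u ∘ ψ, ?_, ?_⟩
        · have h1 : Tendsto (fun k => |φ (u (ψ k))|) atTop atTop :=
            habs.comp hψmono.tendsto_atTop
          exact h1.congr (fun k => by
            simp only [Function.comp_apply]
            rw [abs_of_neg (hψ k)])
        · have h3 : Tendsto (fun k => v (ψ k)) atTop (𝓝 qq) :=
            hv_lim.comp hψmono.tendsto_atTop
          simpa [hu] using h3
  have hmono' : ∀ x y z : X, -φ x ≤ -φ y → -φ y ≤ -φ z → dist x y ≤ dist x z := by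
    intro x y z h1 h2
    have h3 := hmono2 z y x (by linarith) (by linarith)
    rwa [dist_comm y x, dist_comm z x] at h3
  refine le_antisymm ?_ zero_le
  calc μH[1] (univ : Set (Completion X))
      ≤ μH[1] ((⋃ n : ℕ, ((↑) : X → Completion X) '' {x | |φ x| ≤ (n : ℝ)}) ∪
        (endSet φ ∪ endSet (fun x => -φ x))) := measure_mono hcover
    _ ≤ μH[1] (⋃ n : ℕ, ((↑) : X → Completion X) '' {x | |φ x| ≤ (n : ℝ)}) +
        μH[1] (endSet φ ∪ endSet (fun x => -φ x)) := measure_union_le _ _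
    _ ≤ μH[1] (⋃ n : ℕ, ((↑) : X → Completion X) '' {x | |φ x| ≤ (n : ℝ)}) +
        (μH[1] (endSet φ) + μH[1] (endSet (fun x => -φ x))) :=
          add_le_add_right (measure_union_le _ _) _
    _ = 0 := by
        rw [measure_iUnion_null (fun n => hnull n),
          hsing _ (endSet_subsingleton φ hmono),
          hsing _ (endSet_subsingleton (fun x => -φ x) hmono')]
        simp

section Assembly

/-- Type synonym for `↥M` to carry the oscillation pseudometric. -/
def OscX (M : Set ℝ) : Type := ↥M

def toOsc {M : Set ℝ} (x : ↥M) : OscX M := x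
def fromOsc {M : Set ℝ} (x : OscX M) : ↥M := x

variable {N : Type} [MetricSpace N] {M : Set ℝ} (f : M → N) {Lf : NNReal}
  (hf : LipschitzWith Lf f)

/-- The oscillation pseudometric on `M`. -/
noncomputable def oscPseudo : PseudoMetricSpace (OscX M) where
  dist x y := oscDist f (fromOsc x) (fromOsc y)
  dist_self x := oscDist_self f hf _
  dist_comm x y := oscDist_comm f _ _
  dist_triangle x y z := oscDist_triangle f hf _ _ _

end Assembly

/-- Every curve-flat base-point-preserving Lipschitz map from a complete subset of `ℝ`
into a complete metric space factors through a complete purely 1-unrectifiable metric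
space. -/
theorem curveFlat_factors_through_p1u_of_real_subset
    (M : Set ℝ) (hM : IsComplete M) {N : Type} [MetricSpace N] [CompleteSpace N]
    (baseM : M) (baseN : N) (f : M → N) (Lf : NNReal) (hf : LipschitzWith Lf f)
    (hf0 : f baseM = baseN) (hcf : CurveFlat f) :
    Nonempty (P1UFactorization f) := by
  classical
  letI instX : PseudoMetricSpace (OscX M) := oscPseudo f hf
  have hdistX : ∀ x y : OscX M, dist x y = oscDist f (fromOsc x) (fromOsc y) :=
    fun _ _ => rfl
  letI : MeasurableSpace (Completion (OscX M)) := borel (Completion (OscX M))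
  haveI : BorelSpace (Completion (OscX M)) := ⟨rfl⟩
  have hMclosed : IsClosed M := hM.isClosed
  -- the maps
  set g : ↥M → Completion (OscX M) :=
    fun x => ((toOsc x : OscX M) : Completion (OscX M)) with hg
  have lipg : LipschitzWith Lf g := by
    apply LipschitzWith.of_dist_le_mul
    intro x y
    rw [hg]
    simp only
    rw [Completion.dist_eq, hdistX, Subtype.dist_eq]
    exact oscDist_le f hf x y
  set h0 : OscX M → N := fun x => f (fromOsc x) with hh0
  have liph0 : LipschitzWith 1 h0 := by
    apply LipschitzWith.of_dist_le_mul
    intro x y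
    rw [hh0]
    simp only [NNReal.coe_one, one_mul]
    rw [hdistX]
    exact dist_le_oscDist f hf _ _
  set h : Completion (OscX M) → N := Completion.extension h0 with hh
  have liph : LipschitzWith 1 h := liph0.completion_extension
  have hfact : f = h ∘ g := by
    funext x
    rw [hh, hg]
    simp only [Function.comp_apply]
    rw [Completion.extension_coe liph0.uniformContinuous]
    rfl
  -- the "position" function on `OscX M`
  set φ : OscX M → ℝ := fun x => ((fromOsc x : ↥M) : ℝ) with hφ
  -- monotonicity of the oscillation distance
  have hmono : ∀ x y z : OscX M, φ x ≤ φ y → φ y ≤ φ z → dist x y ≤ dist x z := by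
    intro x y z h1 h2
    rw [hdistX, hdistX]
    apply oscDist_mono f hf
    apply uIcc_subset_uIcc left_mem_uIcc
    rw [uIcc_of_le (le_trans h1 h2)]
    exact ⟨h1, h2⟩
  have hmono2 : ∀ x y z : OscX M, φ x ≤ φ y → φ y ≤ φ z → dist y z ≤ dist x z := by
    intro x y z h1 h2
    rw [hdistX, hdistX]
    apply oscDist_mono f hf
    apply uIcc_subset_uIcc _ right_mem_uIcc
    rw [uIcc_of_le (le_trans h1 h2)]
    exact ⟨h1, h2⟩
  -- bounded sequences have convergent subsequences
  have hcpt : ∀ n : ℕ, ∀ u : ℕ → OscX M, (∀ k, |φ (u k)| ≤ n) →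
      ∃ (x : OscX M) (ψ : ℕ → ℕ), StrictMono ψ ∧
        Tendsto (fun k => dist (u (ψ k)) x) atTop (𝓝 0) := by
    intro n u hu
    have hBc : IsCompact (M ∩ Icc (-(n:ℝ)) n) := isCompact_Icc.inter_left hMclosed
    have hmem : ∀ k, ((fromOsc (u k) : ↥M) : ℝ) ∈ M ∩ Icc (-(n:ℝ)) n := by
      intro k
      exact ⟨(fromOsc (u k)).2, abs_le.mp (hu k)⟩
    obtain ⟨a, ha, ψ, hψmono, hψ⟩ := hBc.tendsto_subseq hmem
    refine ⟨toOsc ⟨a, ha.1⟩, ψ, hψmono, ?_⟩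
    have hd : Tendsto (fun k => dist (((fromOsc (u (ψ k)) : ↥M) : ℝ)) a) atTop (𝓝 0) :=
      tendsto_iff_dist_tendsto_zero.mp hψ
    have hbound : ∀ k, dist (u (ψ k)) (toOsc ⟨a, ha.1⟩) ≤
        Lf * dist (((fromOsc (u (ψ k)) : ↥M) : ℝ)) a := by
      intro k
      rw [hdistX]
      exact oscDist_le f hf (fromOsc (u (ψ k))) (⟨a, ha.1⟩ : ↥M)
    have hz : Tendsto (fun k => (Lf : ℝ) * dist (((fromOsc (u (ψ k)) : ↥M) : ℝ)) a)
        atTop (𝓝 0) := by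
      rw [show (0:ℝ) = Lf * 0 by ring]
      exact hd.const_mul _
    exact squeeze_zero (fun k => dist_nonneg) hbound hz
  -- each bounded piece has null image in the completion
  have hnull : ∀ n : ℕ,
      μH[1] (((↑) : OscX M → Completion (OscX M)) '' {x | |φ x| ≤ (n : ℝ)}) = 0 := by
    intro n
    set B : Set ℝ := M ∩ Icc (-(n:ℝ)) n with hB
    have hBc : IsCompact B := isCompact_Icc.inter_left hMclosed
    have hBmeas : MeasurableSet B := (hMclosed.inter isClosed_Icc).measurableSet
    have hBvol : volume B ≠ ⊤ := by
      refine ((measure_mono inter_subset_right).trans_lt ?_).ne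
      rw [Real.volume_Icc]
      exact ENNReal.ofReal_lt_top
    set γ₀ : ℝ → ↥M := fun t => if ht : t ∈ M then (⟨t, ht⟩ : ↥M) else baseM with hγ₀
    have hγ₀M : ∀ (t : ℝ) (ht : t ∈ M), γ₀ t = ⟨t, ht⟩ := by
      intro t ht
      rw [hγ₀]
      simp only
      rw [dif_pos ht]
    have hγ₀sub : ∀ c : ↥M, γ₀ ((c : ℝ)) = c := by
      intro c
      rw [hγ₀M _ c.2]
    set q : ℝ → Completion (OscX M) :=
      fun t => ((toOsc (γ₀ t) : OscX M) : Completion (OscX M)) with hq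
    -- image identification
    have himage : ((↑) : OscX M → Completion (OscX M)) '' {x | |φ x| ≤ (n : ℝ)}
        = q '' B := by
      ext w
      constructor
      · rintro ⟨x, hx, rfl⟩
        refine ⟨((fromOsc x : ↥M) : ℝ), ⟨(fromOsc x).2, abs_le.mp hx⟩, ?_⟩
        rw [hq]
        simp only
        rw [hγ₀sub (fromOsc x)]
        rfl
      · rintro ⟨t, ht, rfl⟩
        refine ⟨toOsc (γ₀ t), ?_, rfl⟩
        show |((fromOsc (toOsc (γ₀ t)) : ↥M) : ℝ)| ≤ (n : ℝ)
        have h1 : γ₀ t = ⟨t, ht.1⟩ := hγ₀M t ht.1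
        rw [show fromOsc (toOsc (γ₀ t)) = γ₀ t from rfl, h1]
        exact abs_le.mpr ht.2
    -- Lipschitz property of q on B
    have hqlip : LipschitzOnWith Lf q B := by
      apply LipschitzOnWith.of_dist_le_mul
      intro t ht t' ht'
      rw [hq]
      simp only
      rw [Completion.dist_eq, hdistX]
      rw [show fromOsc (toOsc (γ₀ t)) = γ₀ t from rfl,
        show fromOsc (toOsc (γ₀ t')) = γ₀ t' from rfl, hγ₀M t ht.1, hγ₀M t' ht'.1]
      exact oscDist_le f hf (⟨t, ht.1⟩ : ↥M) (⟨t', ht'.1⟩ : ↥M)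
    -- Lipschitz property of γ₀ on B
    have hγ₀lip : LipschitzOnWith 1 γ₀ B := by
      apply LipschitzOnWith.of_dist_le_mul
      intro t ht t' ht'
      rw [hγ₀M t ht.1, hγ₀M t' ht'.1, Subtype.dist_eq, NNReal.coe_one, one_mul]
    have hae := hcf B hBc γ₀ 1 hγ₀lip
    -- flatness of q
    have hflat : ∀ᵐ x ∂(volume.restrict B), ∀ ε : ℝ, 0 < ε → ∃ δ : ℝ, 0 < δ ∧
        ∀ r : ℝ, 0 < r → r ≤ δ → ∀ y ∈ B ∩ closedBall x r, ∀ z ∈ B ∩ closedBall x r,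
          dist (q y) (q z) ≤ ε * r := by
      filter_upwards [hae, ae_restrict_mem hBmeas] with x hx hxB
      intro ε hε
      have h5 : ∀ᶠ y in nhdsWithin x (B \ {x}),
          dist (f (γ₀ x)) (f (γ₀ y)) / |x - y| < ε/2 :=
        hx.eventually_lt_const (by linarith)
      obtain ⟨δ, hδpos, hδ⟩ := nhdsWithin_basis_ball.eventually_iff.mp h5
      refine ⟨δ/2, by linarith, ?_⟩
      intro r hrpos hrδ y hy z hz
      -- the single-point estimate
      have claim : ∀ c : ↥M, (c : ℝ) ∈ B → |(c : ℝ) - x| ≤ δ/2 →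
          dist (f (γ₀ x)) (f c) ≤ (ε/2) * |(c : ℝ) - x| := by
        intro c hcB hcx
        by_cases hcx0 : (c : ℝ) = x
        · have hc : c = γ₀ x := by
            rw [← hcx0, hγ₀sub]
          rw [← hc, dist_self, hcx0]
          simp
        · have hmem : (c : ℝ) ∈ Metric.ball x δ ∩ (B \ {x}) := by
            constructor
            · rw [Metric.mem_ball, Real.dist_eq]
              linarith
            · exact ⟨hcB, hcx0⟩
          have h6 := hδ hmem
          rw [hγ₀sub c] at h6
          have habs : 0 < |x - (c : ℝ)| := by
            rw [abs_pos, sub_ne_zero]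
            exact fun hxc => hcx0 hxc.symm
          rw [div_lt_iff₀ habs] at h6
          rw [abs_sub_comm]
          linarith
      -- oscillation bound
      rw [hq]
      simp only
      rw [Completion.dist_eq, hdistX,
        show fromOsc (toOsc (γ₀ y)) = γ₀ y from rfl,
        show fromOsc (toOsc (γ₀ z)) = γ₀ z from rfl]
      refine csSup_le (oscSet_nonempty f _ _) ?_
      rintro d ⟨a, b, ha, hb, rfl⟩
      rw [hγ₀M y hy.1.1, hγ₀M z hz.1.1] at ha hb
      simp only at ha hb
      -- the interval [[y,z]] is inside B ∩ closedBall x r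
      have hIccB : uIcc y z ⊆ Icc (-(n:ℝ)) n := by
        have hnn : (-(n:ℝ)) ≤ n := by
          have : (0:ℝ) ≤ n := Nat.cast_nonneg n
          linarith
        rw [← uIcc_of_le hnn]
        exact uIcc_subset_uIcc (by rw [uIcc_of_le hnn]; exact hy.1.2)
          (by rw [uIcc_of_le hnn]; exact hz.1.2)
      have hIccBall : uIcc y z ⊆ Metric.closedBall x r := by
        rw [Real.closedBall_eq_Icc]
        have hrr : x - r ≤ x + r := by linarith
        rw [← uIcc_of_le hrr]
        refine uIcc_subset_uIcc ?_ ?_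
        · rw [uIcc_of_le hrr, ← Real.closedBall_eq_Icc]
          exact hy.2
        · rw [uIcc_of_le hrr, ← Real.closedBall_eq_Icc]
          exact hz.2
      have hstep : ∀ c : ↥M, (c : ℝ) ∈ uIcc (y:ℝ) (z:ℝ) →
          dist (f (γ₀ x)) (f c) ≤ (ε/2) * r := by
        intro c hc
        have hcB : (c : ℝ) ∈ B := ⟨c.2, hIccB hc⟩
        have hcr : |(c : ℝ) - x| ≤ r := by
          have := hIccBall hc
          rw [Metric.mem_closedBall, Real.dist_eq] at this
          exact this
        have hcd : |(c : ℝ) - x| ≤ δ/2 := le_trans hcr hrδ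
        calc dist (f (γ₀ x)) (f c) ≤ (ε/2) * |(c : ℝ) - x| := claim c hcB hcd
          _ ≤ (ε/2) * r := by
              apply mul_le_mul_of_nonneg_left hcr (by linarith)
      calc dist (f a) (f b) ≤ dist (f a) (f (γ₀ x)) + dist (f (γ₀ x)) (f b) :=
            dist_triangle _ _ _
        _ ≤ (ε/2) * r + (ε/2) * r := by
            refine add_le_add ?_ (hstep b hb)
            rw [dist_comm]
            exact hstep a ha
        _ = ε * r := by ring
    have hmain := hausdorff_image_null hBmeas hBvol q Lf hqlip hflat
    rw [himage]
    exact hmain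
  -- the completion is H¹-null, hence purely 1-unrectifiable
  have huniv : μH[1] (univ : Set (Completion (OscX M))) = 0 :=
    completion_univ_null φ hcpt hmono hmono2 hnull
  have hp1u : PurelyOneUnrectifiable (Completion (OscX M)) := by
    intro A γ C hγ
    have h2 : H1 (Completion (OscX M)) univ = 0 := huniv
    exact le_antisymm
      (le_trans (measure_mono (subset_univ _)) (le_of_eq h2)) zero_le
  exact ⟨{ Q := Completion (OscX M), iQ := inferInstance,
           complete := inferInstance, p1u := hp1u, g := g, h := h,
           Lg := Lf, Lh := 1, lipg := lipg, liph := liph, fact := hfact }⟩
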